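/- Let b, c, Y, θ ∈ ℝ with sin θ ≠ 0 and Y² − 2cY·cos θ + c² − 2b²(1 − cos θ) = 0; set z = cY − b² and assume z ≠ 0. Define a sequence (Δ_m) by Δ_1 = Y² − b², Δ_2 = Y⁴ − 3Y²b² + 2Yb²c + b⁴ − b²c², and Δ_{m+1} = (Y² + c² − 2b²)Δ_m − z²Δ_{m−1} for m ≥ 2. Then for all m ≥ 1, Δ_m = z^{m−1} · (z·sin((m+1)θ) + (b² − c²)·sin(mθ)) / sin θ. -/

import Mathlib

theorem closed_form_even (b c Y θ z : ℝ) (hθ : Real.sin θ ≠ 0)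
    (hconstraint : Y ^ 2 - 2 * c * Y * Real.cos θ + c ^ 2 - 2 * b ^ 2 * (1 - Real.cos θ) = 0)
    (hz : z = c * Y - b ^ 2) (hz0 : z ≠ 0)
    (Δ : ℕ → ℝ)
    (h1 : Δ 1 = Y ^ 2 - b ^ 2)
    (h2 : Δ 2 = Y ^ 4 - 3 * Y ^ 2 * b ^ 2 + 2 * Y * b ^ 2 * c + b ^ 4 - b ^ 2 * c ^ 2)
    (hrec : ∀ m : ℕ, 2 ≤ m →
      Δ (m + 1) = (Y ^ 2 + c ^ 2 - 2 * b ^ 2) * Δ m - z ^ 2 * Δ (m - 1)) :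
    ∀ m : ℕ, 1 ≤ m →
      Δ m = z ^ (m - 1) *
        (z * Real.sin (((m : ℝ) + 1) * θ) + (b ^ 2 - c ^ 2) * Real.sin (m * θ)) / Real.sin θ := by
  have hS : Y ^ 2 + c ^ 2 - 2 * b ^ 2 = 2 * z * Real.cos θ := by
    linear_combination hconstraint - 2 * Real.cos θ * hz
  have key : ∀ x : ℝ, Real.sin ((x + 2) * θ)
      = 2 * Real.cos θ * Real.sin ((x + 1) * θ) - Real.sin (x * θ) := by
    intro x
    have e1 : (x + 2) * θ = (x + 1) * θ + θ := by ring
    have e2 : x * θ = (x + 1) * θ - θ := by ring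
    rw [e1, e2, Real.sin_add, Real.sin_sub]; ring
  have P1 : Δ 1 = z ^ (1 - 1) *
      (z * Real.sin (((1 : ℕ) + 1 : ℝ) * θ) + (b ^ 2 - c ^ 2) * Real.sin ((1 : ℕ) * θ)) / Real.sin θ := by
    rw [h1]
    have : ((1 : ℕ) + 1 : ℝ) * θ = 2 * θ := by norm_num
    rw [this, Real.sin_two_mul]
    field_simp
    simp only [Nat.cast_one, one_mul]
    linear_combination Real.sin θ * hS
  have P2 : Δ 2 = z ^ (2 - 1) *
      (z * Real.sin (((2 : ℕ) + 1 : ℝ) * θ) + (b ^ 2 - c ^ 2) * Real.sin ((2 : ℕ) * θ)) / Real.sin θ := by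
    rw [h2]
    have e3 : ((2 : ℕ) + 1 : ℝ) * θ = 3 * θ := by norm_num
    have e2 : ((2 : ℕ) : ℝ) * θ = 2 * θ := by norm_num
    rw [e3, e2, Real.sin_three_mul, Real.sin_two_mul, eq_div_iff hθ]
    have hcs : Real.sin θ ^ 2 = 1 - Real.cos θ ^ 2 := by
      linear_combination Real.sin_sq_add_cos_sq θ
    linear_combination (Real.sin θ * (Y^2 + c^2 - 2*b^2 + 2*z*Real.cos θ + b^2 - c^2)) * hS
      + 4 * z^2 * Real.sin θ * hcs
      + (Real.sin θ * (z + c*Y - b^2)) * hz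
  -- two-step induction
  have step : ∀ k : ℕ,
      (Δ (k + 1) = z ^ (k + 1 - 1) *
        (z * Real.sin ((((k + 1 : ℕ) : ℝ) + 1) * θ) + (b ^ 2 - c ^ 2) * Real.sin (((k + 1 : ℕ) : ℝ) * θ)) / Real.sin θ)
      ∧ (Δ (k + 2) = z ^ (k + 2 - 1) *
        (z * Real.sin ((((k + 2 : ℕ) : ℝ) + 1) * θ) + (b ^ 2 - c ^ 2) * Real.sin (((k + 2 : ℕ) : ℝ) * θ)) / Real.sin θ) := by
    intro k
    induction k with
    | zero => exact ⟨P1, P2⟩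
    | succ n ih =>
      refine ⟨ih.2, ?_⟩
      have hr := hrec (n + 2) (by omega)
      have hsub : (n + 2) - 1 = n + 1 := rfl
      rw [hsub] at hr
      rw [hr, ih.1, ih.2, hS]
      have k1 : Real.sin ((((n:ℝ) + 3) + 1) * θ)
          = 2 * Real.cos θ * Real.sin (((n:ℝ) + 3) * θ) - Real.sin (((n:ℝ) + 2) * θ) := by
        have := key ((n:ℝ) + 2)
        convert this using 3 <;> ring
      have k2 : Real.sin (((n:ℝ) + 3) * θ)
          = 2 * Real.cos θ * Real.sin (((n:ℝ) + 2) * θ) - Real.sin (((n:ℝ) + 1) * θ) := by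
        have := key ((n:ℝ) + 1)
        convert this using 3 <;> ring
      push_cast
      rw [show ((n:ℝ) + 1 + 2 + 1) * θ = (((n:ℝ) + 3) + 1) * θ by ring,
        show ((n:ℝ) + 1 + 2) * θ = ((n:ℝ) + 3) * θ by ring,
        show ((n:ℝ) + 2 + 1) * θ = ((n:ℝ) + 3) * θ by ring, k1, k2]
      field_simp
      ring
  intro m hm
  obtain ⟨k, rfl⟩ : ∃ k, m = k + 1 := ⟨m - 1, by omega⟩
  exact (step k).1
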